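/- (Corollary of Theorem 1 justifying the CLiD indicator of Section 3.3.) Let q_mem and q_out be pmfs on α × γ. Suppose the conditional-overfitting inequality Kcond(q_out) - Kcond(q_mem) ≥ Kmarg(q_out) - Kmarg(q_mem) holds and that δ_H := (H_X(q_mem) - Hcond(q_mem)) - (H_X(q_out) - Hcond(q_out)) satisfies δ_H ≥ 0. Then the expected conditional likelihood discrepancy separates the two distributions: ∑_{(x,c)} q_mem(x,c) · (Real.log (p c x) - Real.log (pX x)) ≥ ∑_{(x,c)} q_out(x,c) · (Real.log (p c x) - Real.log (pX x)). -/
import Mathlib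


open Finset

namespace CLiD

variable {α γ : Type*} [Fintype α] [Fintype γ]

/-- Marginal of a pmf on `α × γ` onto `α`. -/
noncomputable def qX (q : α × γ → ℝ) (x : α) : ℝ := ∑ c, q (x, c)

/-- Marginal of a pmf on `α × γ` onto `γ`. -/
noncomputable def qC (q : α × γ → ℝ) (c : γ) : ℝ := ∑ x, q (x, c)

/-- Conditional distribution of `x` given `c`. -/
noncomputable def qCond (q : α × γ → ℝ) (x : α) (c : γ) : ℝ := q (x, c) / qC q c

/-- Averaged conditional KL divergence
`Kcond(q) = ∑_{(x,c) with q(x,c) > 0} q(x,c) * log (q(x|c) / p c x)`. -/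
noncomputable def Kcond (p : γ → α → ℝ) (q : α × γ → ℝ) : ℝ :=
  ∑ z ∈ Finset.univ.filter (fun z : α × γ => 0 < q z),
    q z * Real.log (qCond q z.1 z.2 / p z.2 z.1)

/-- Marginal KL divergence
`Kmarg(q) = ∑_{x with q_X(x) > 0} q_X(x) * log (q_X(x) / pX x)`. -/
noncomputable def Kmarg (pX : α → ℝ) (q : α × γ → ℝ) : ℝ :=
  ∑ x ∈ Finset.univ.filter (fun x : α => 0 < qX q x),
    qX q x * Real.log (qX q x / pX x)

/-- Marginal entropy `H_X(q) = -∑_{x with q_X(x) > 0} q_X(x) * log (q_X(x))`. -/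
noncomputable def HX (q : α × γ → ℝ) : ℝ :=
  -∑ x ∈ Finset.univ.filter (fun x : α => 0 < qX q x), qX q x * Real.log (qX q x)

/-- Averaged conditional entropy
`Hcond(q) = -∑_{(x,c) with q(x,c) > 0} q(x,c) * log (q(x|c))`. -/
noncomputable def Hcond (q : α × γ → ℝ) : ℝ :=
  -∑ z ∈ Finset.univ.filter (fun z : α × γ => 0 < q z),
    q z * Real.log (qCond q z.1 z.2)

lemma key (p : γ → α → ℝ) (hp : ∀ c x, 0 < p c x)
    (pX : α → ℝ) (hpX : ∀ x, 0 < pX x)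
    (q : α × γ → ℝ) (hq : ∀ z, 0 ≤ q z) :
    ∑ z : α × γ, q z * (Real.log (p z.2 z.1) - Real.log (pX z.1)) =
      (Kmarg pX q - Kcond p q) + (HX q - Hcond q) := by
  have hA : ∑ z : α × γ, q z * Real.log (p z.2 z.1)
      = ∑ z ∈ Finset.univ.filter (fun z : α × γ => 0 < q z),
          q z * Real.log (p z.2 z.1) := by
    rw [eq_comm]
    apply Finset.sum_subset (Finset.filter_subset _ _)
    intro z _ hz
    simp only [Finset.mem_filter, Finset.mem_univ, true_and, not_lt] at hz
    have : q z = 0 := le_antisymm hz (hq z)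
    simp [this]
  have hB : ∑ z : α × γ, q z * Real.log (pX z.1)
      = ∑ x ∈ Finset.univ.filter (fun x : α => 0 < qX q x),
          qX q x * Real.log (pX x) := by
    rw [Fintype.sum_prod_type]
    have h1 : ∀ x : α, ∑ c, q (x, c) * Real.log (pX x) = qX q x * Real.log (pX x) := by
      intro x; rw [← Finset.sum_mul]; rfl
    rw [Finset.sum_congr rfl fun x _ => h1 x, eq_comm]
    apply Finset.sum_subset (Finset.filter_subset _ _)
    intro x _ hx
    simp only [Finset.mem_filter, Finset.mem_univ, true_and, not_lt] at hx
    have h0 : qX q x = 0 :=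
      le_antisymm hx (Finset.sum_nonneg fun c _ => hq _)
    simp [h0]
  have hKc : Kcond p q = -Hcond q - ∑ z ∈ Finset.univ.filter (fun z : α × γ => 0 < q z),
      q z * Real.log (p z.2 z.1) := by
    unfold Kcond Hcond
    rw [neg_neg, ← Finset.sum_sub_distrib]
    apply Finset.sum_congr rfl
    intro z hz
    simp only [Finset.mem_filter, Finset.mem_univ, true_and] at hz
    have hqC : 0 < qC q z.2 := by
      have : q (z.1, z.2) ≤ qC q z.2 :=
        Finset.single_le_sum (fun x _ => hq (x, z.2)) (Finset.mem_univ z.1)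
      have hz' : 0 < q (z.1, z.2) := hz
      linarith
    have hcond : qCond q z.1 z.2 ≠ 0 := by
      unfold qCond; positivity
    rw [Real.log_div hcond (ne_of_gt (hp z.2 z.1))]
    ring
  have hKm : Kmarg pX q = -HX q - ∑ x ∈ Finset.univ.filter (fun x : α => 0 < qX q x),
      qX q x * Real.log (pX x) := by
    unfold Kmarg HX
    rw [neg_neg, ← Finset.sum_sub_distrib]
    apply Finset.sum_congr rfl
    intro x hx
    simp only [Finset.mem_filter, Finset.mem_univ, true_and] at hx
    rw [Real.log_div (ne_of_gt hx) (ne_of_gt (hpX x))]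
    ring
  have : ∑ z : α × γ, q z * (Real.log (p z.2 z.1) - Real.log (pX z.1))
      = ∑ z : α × γ, q z * Real.log (p z.2 z.1) - ∑ z : α × γ, q z * Real.log (pX z.1) := by
    rw [← Finset.sum_sub_distrib]; apply Finset.sum_congr rfl; intros; ring
  rw [this, hA, hB]
  linarith [hKc, hKm]

/-- Corollary of Theorem 1 justifying the CLiD indicator: if the conditional-overfitting
inequality holds and the entropy correction `δ_H` is nonnegative, then the expected
conditional likelihood discrepancy separates the member and hold-out distributions. -/
theorem clid_separates_of_conditional_overfitting
    [Nonempty α] [Nonempty γ]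
    (p : γ → α → ℝ) (hp_nonneg : ∀ c x, 0 ≤ p c x) (hp_pos : ∀ c x, 0 < p c x)
    (hp_sum : ∀ c, ∑ x, p c x = 1)
    (pX : α → ℝ) (hpX_nonneg : ∀ x, 0 ≤ pX x) (hpX_pos : ∀ x, 0 < pX x)
    (hpX_sum : ∑ x, pX x = 1)
    (qmem : α × γ → ℝ) (hqmem_nonneg : ∀ z, 0 ≤ qmem z) (hqmem_sum : ∑ z, qmem z = 1)
    (qout : α × γ → ℝ) (hqout_nonneg : ∀ z, 0 ≤ qout z) (hqout_sum : ∑ z, qout z = 1)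
    (h_overfit : Kcond p qout - Kcond p qmem ≥ Kmarg pX qout - Kmarg pX qmem)
    (h_deltaH : (HX qmem - Hcond qmem) - (HX qout - Hcond qout) ≥ 0) :
    ∑ z : α × γ, qmem z * (Real.log (p z.2 z.1) - Real.log (pX z.1)) ≥
      ∑ z : α × γ, qout z * (Real.log (p z.2 z.1) - Real.log (pX z.1)) := by
  have hm := key p hp_pos pX hpX_pos qmem hqmem_nonneg
  have ho := key p hp_pos pX hpX_pos qout hqout_nonneg
  rw [ge_iff_le, ho, hm]
  linarith

end CLiD
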